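/- arXiv:2506.02712 — 2 statements merged into one kernel-verified Lean document; each statement's English description precedes it below -/
import Mathlib

section
/- Empirical target loss bound (feature-based, core inequality): let ℓ be a metric on Y with values in [0,1], f : X → ℝ^d, g : ℝ^d → Y γ-Lipschitz with respect to ℓ, and w = g ∘ f. Let (x_i, y_i), i=1..n_s, be source pairs and (x̃_j, ỹ_j), j=1..n_t, be target pairs. Let Π be any n_s × n_t matrix with nonnegative entries, row sums p_i = ∑_j Π_{ij}, column sums q_j = ∑_i Π_{ij}, and total mass α > 0. Suppose L ≥ 0 is such that |ℓ(w(x_i),y_i) − ℓ(w(x̃_j),ỹ_j)| ≤ 2γ‖f(x_i)−f(x̃_j)‖ + 2L for all i,j. Then (1/n_t) ∑_j ℓ(w(x̃_j),ỹ_j) ≤ ∑_i (p_i/α) ℓ(w(x_i),y_i) + (2/α) ∑_{i,j} γ‖f(x_i)−f(x̃_j)‖ Π_{ij} + (1/2) ∑_j |1/n_t − q_j/α| + 2L. -/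
open Finset

/-- Core inequality behind the feature-based empirical target loss bound
(Theorem 3.2 of the paper). -/
theorem stmt_5 {X Y : Type*} (d : ℕ)
    (ℓ : Y → Y → ℝ)
    (hℓ0 : ∀ a b, 0 ≤ ℓ a b) (hℓ1 : ∀ a b, ℓ a b ≤ 1)
    (heq : ∀ a b, ℓ a b = 0 ↔ a = b)
    (hsymm : ∀ a b, ℓ a b = ℓ b a)
    (htri : ∀ a b c, ℓ a c ≤ ℓ a b + ℓ b c)
    (f : X → EuclideanSpace ℝ (Fin d))
    (g : EuclideanSpace ℝ (Fin d) → Y)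
    (γ : ℝ) (hγ : 0 < γ)
    (hLip : ∀ t t', ℓ (g t) (g t') ≤ γ * ‖t - t'‖)
    (w : X → Y) (hw : w = fun x => g (f x))
    (ns nt : ℕ) (hns : 0 < ns) (hnt : 0 < nt)
    (x : Fin ns → X) (y : Fin ns → Y)
    (tx : Fin nt → X) (ty : Fin nt → Y)
    (α : ℝ) (hα0 : 0 < α) (hα1 : α ≤ 1)
    (Pl : Fin ns → Fin nt → ℝ)
    (hPl : ∀ i j, 0 ≤ Pl i j)
    (hmass : ∑ i, ∑ j, Pl i j = α)
    (L : ℝ) (hL : 0 ≤ L)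
    (hcomp : ∀ i j,
      |ℓ (w (x i)) (y i) - ℓ (w (tx j)) (ty j)| ≤
        2 * γ * ‖f (x i) - f (tx j)‖ + 2 * L) :
    (1 / (nt : ℝ)) * ∑ j, ℓ (w (tx j)) (ty j) ≤
      ∑ i, ((∑ j, Pl i j) / α) * ℓ (w (x i)) (y i)
        + (2 / α) * ∑ i, ∑ j, γ * ‖f (x i) - f (tx j)‖ * Pl i j
        + (1 / 2) * ∑ j, |1 / (nt : ℝ) - (∑ i, Pl i j) / α|
        + 2 * L := by
  classical
  set S : Fin ns → ℝ := fun i => ℓ (w (x i)) (y i) with hS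
  set T : Fin nt → ℝ := fun j => ℓ (w (tx j)) (ty j) with hT
  set q : Fin nt → ℝ := fun j => (∑ i, Pl i j) / α with hq
  have hqsum : ∑ j, q j = 1 := by
    simp only [hq, ← Finset.sum_div]
    rw [Finset.sum_comm, hmass, div_self hα0.ne']
  have hntsum : ∑ _j : Fin nt, (1 : ℝ) / nt = 1 := by
    rw [Finset.sum_const, card_univ, Fintype.card_fin, nsmul_eq_mul]
    field_simp
  have key : ∀ i j, T j ≤ S i + 2 * γ * ‖f (x i) - f (tx j)‖ + 2 * L := by
    intro i j
    have h := (abs_le.mp (hcomp i j)).1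
    simp only [hS, hT]
    linarith
  -- Claim C
  have hC : ∑ j, q j * T j ≤
      ∑ i, ((∑ j, Pl i j) / α) * S i
        + (2 / α) * ∑ i, ∑ j, γ * ‖f (x i) - f (tx j)‖ * Pl i j + 2 * L := by
    have h1 : ∑ j, q j * T j = (1 / α) * ∑ i, ∑ j, Pl i j * T j := by
      simp only [Finset.mul_sum]
      rw [Finset.sum_comm]
      refine Finset.sum_congr rfl fun j _ => ?_
      rw [hq, div_mul_eq_mul_div, Finset.sum_mul, Finset.sum_div]
      exact Finset.sum_congr rfl fun i _ => by ring
    have h2 : ∑ i, ∑ j, Pl i j * T j ≤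
        ∑ i, ∑ j, Pl i j * (S i + 2 * γ * ‖f (x i) - f (tx j)‖ + 2 * L) := by
      refine Finset.sum_le_sum fun i _ => Finset.sum_le_sum fun j _ => ?_
      exact mul_le_mul_of_nonneg_left (key i j) (hPl i j)
    have h3 : (1 / α) * ∑ i, ∑ j, Pl i j * (S i + 2 * γ * ‖f (x i) - f (tx j)‖ + 2 * L)
        = ∑ i, ((∑ j, Pl i j) / α) * S i
          + (2 / α) * ∑ i, ∑ j, γ * ‖f (x i) - f (tx j)‖ * Pl i j
          + 2 * L * ((∑ i, ∑ j, Pl i j) / α) := by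
      simp only [Finset.mul_sum, Finset.sum_mul, Finset.sum_div, ← Finset.sum_add_distrib]
      refine Finset.sum_congr rfl fun i _ => ?_
      refine Finset.sum_congr rfl fun j _ => ?_
      field_simp
    have h4 : (1 / α) * ∑ i, ∑ j, Pl i j * T j ≤
        (1 / α) * ∑ i, ∑ j, Pl i j * (S i + 2 * γ * ‖f (x i) - f (tx j)‖ + 2 * L) :=
      mul_le_mul_of_nonneg_left h2 (by positivity)
    rw [hmass, div_self hα0.ne', mul_one] at h3
    rw [h1]
    linarith
  -- Claim D
  have hD : ∑ j, (1 / (nt : ℝ) - q j) * (T j - 1 / 2) ≤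
      (1 / 2) * ∑ j, |1 / (nt : ℝ) - q j| := by
    rw [Finset.mul_sum]
    refine Finset.sum_le_sum fun j _ => ?_
    have hb : |T j - 1 / 2| ≤ 1 / 2 := by
      rw [abs_le]
      constructor <;> simp only [hT] <;> [linarith [hℓ0 (w (tx j)) (ty j)]; linarith [hℓ1 (w (tx j)) (ty j)]]
    calc (1 / (nt : ℝ) - q j) * (T j - 1 / 2)
        ≤ |(1 / (nt : ℝ) - q j) * (T j - 1 / 2)| := le_abs_self _
      _ = |1 / (nt : ℝ) - q j| * |T j - 1 / 2| := abs_mul _ _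
      _ ≤ |1 / (nt : ℝ) - q j| * (1 / 2) := mul_le_mul_of_nonneg_left hb (abs_nonneg _)
      _ = 1 / 2 * |1 / (nt : ℝ) - q j| := by ring
  -- split
  have hsplit : (1 / (nt : ℝ)) * ∑ j, T j
      = ∑ j, q j * T j + ∑ j, (1 / (nt : ℝ) - q j) * (T j - 1 / 2)
        + (1 / 2) * (∑ _j : Fin nt, (1 : ℝ) / nt - ∑ j, q j) := by
    rw [Finset.mul_sum, ← Finset.sum_sub_distrib, Finset.mul_sum, ← Finset.sum_add_distrib,
      ← Finset.sum_add_distrib]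
    exact Finset.sum_congr rfl fun j _ => by ring
  rw [hqsum, hntsum, sub_self, mul_zero, add_zero] at hsplit
  simp only [hS, hT, hq] at hsplit hC hD ⊢
  linarith
end

section
/- Joint distribution-based transport bound (core inequality): let ℓ be a metric on Y with values in [0,1] that is ζ-Lipschitz in each argument (with Y ⊆ ℝ), f : X → ℝ^d, and let w = g∘f and w' = g'∘f with g, g' : ℝ^d → Y each γ-Lipschitz with respect to the Euclidean distance (i.e., |g(t)−g(t')| ≤ γ‖t−t'‖). Let Π be an n_s × n_t nonnegative matrix with row sums p̂_i, column sums q̂_j. Then ∑_j q̂_j ℓ(w(x̃_j), w'(x̃_j)) − ∑_i p̂_i ℓ(w'(x_i), y_i) ≤ ∑_{i,j} Π_{ij} [ ζγ‖f(x̃_j) − f(x_i)‖ + ℓ(w(x̃_j), y_i) ]. -/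
open Finset

/-- Core joint distribution-based transport inequality (Theorem 3.3 of the paper),
with label space `Y ⊆ ℝ`. -/
theorem stmt_6 {X : Type*} (d : ℕ)
    (ℓ : ℝ → ℝ → ℝ)
    (hℓ0 : ∀ a b, 0 ≤ ℓ a b) (hℓ1 : ∀ a b, ℓ a b ≤ 1)
    (heq : ∀ a b, ℓ a b = 0 ↔ a = b)
    (hsymm : ∀ a b, ℓ a b = ℓ b a)
    (htri : ∀ a b c, ℓ a c ≤ ℓ a b + ℓ b c)
    (ζ : ℝ) (hζ : 0 < ζ)
    (hLipℓ : ∀ a b c, |ℓ a b - ℓ a c| ≤ ζ * |b - c|)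
    (hLipℓ' : ∀ a b c, |ℓ a c - ℓ b c| ≤ ζ * |a - b|)
    (f : X → EuclideanSpace ℝ (Fin d))
    (g g' : EuclideanSpace ℝ (Fin d) → ℝ)
    (γ : ℝ) (hγ : 0 < γ)
    (hLipg : ∀ t t', |g t - g t'| ≤ γ * ‖t - t'‖)
    (hLipg' : ∀ t t', |g' t - g' t'| ≤ γ * ‖t - t'‖)
    (w w' : X → ℝ) (hw : w = fun x => g (f x)) (hw' : w' = fun x => g' (f x))
    (ns nt : ℕ) (hns : 0 < ns) (hnt : 0 < nt)
    (x : Fin ns → X) (y : Fin ns → ℝ)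
    (tx : Fin nt → X)
    (Pl : Fin ns → Fin nt → ℝ)
    (hPl : ∀ i j, 0 ≤ Pl i j) :
    ∑ j, (∑ i, Pl i j) * ℓ (w (tx j)) (w' (tx j))
      - ∑ i, (∑ j, Pl i j) * ℓ (w' (x i)) (y i) ≤
      ∑ i, ∑ j, Pl i j * (ζ * γ * ‖f (tx j) - f (x i)‖ + ℓ (w (tx j)) (y i)) := by
  have key : ∀ i j, ℓ (w (tx j)) (w' (tx j)) - ℓ (w' (x i)) (y i) ≤
      ζ * γ * ‖f (tx j) - f (x i)‖ + ℓ (w (tx j)) (y i) := by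
    intro i j
    have h1 : ℓ (w (tx j)) (w' (tx j)) ≤ ℓ (w (tx j)) (y i) + ℓ (y i) (w' (tx j)) :=
      htri _ _ _
    have h2 : ℓ (y i) (w' (tx j)) - ℓ (y i) (w' (x i)) ≤ ζ * |w' (tx j) - w' (x i)| :=
      le_trans (le_abs_self _) (hLipℓ (y i) (w' (tx j)) (w' (x i)))
    have h3 : |w' (tx j) - w' (x i)| ≤ γ * ‖f (tx j) - f (x i)‖ := by
      rw [hw']; exact hLipg' _ _
    have h4 : ζ * |w' (tx j) - w' (x i)| ≤ ζ * (γ * ‖f (tx j) - f (x i)‖) :=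
      mul_le_mul_of_nonneg_left h3 hζ.le
    have h5 : ℓ (y i) (w' (x i)) = ℓ (w' (x i)) (y i) := hsymm _ _
    nlinarith [h1, h2, h4]
  calc ∑ j, (∑ i, Pl i j) * ℓ (w (tx j)) (w' (tx j))
      - ∑ i, (∑ j, Pl i j) * ℓ (w' (x i)) (y i)
      = ∑ i, ∑ j, Pl i j * (ℓ (w (tx j)) (w' (tx j)) - ℓ (w' (x i)) (y i)) := by
        simp only [Finset.mul_sum, Finset.sum_sub_distrib, Finset.sum_mul, mul_sub]
        rw [Finset.sum_comm (s := Finset.univ) (t := Finset.univ)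
          (f := fun j i => Pl i j * ℓ (w (tx j)) (w' (tx j)))]
    _ ≤ _ := by
        apply Finset.sum_le_sum; intro i _
        apply Finset.sum_le_sum; intro j _
        exact mul_le_mul_of_nonneg_left (key i j) (hPl i j)
end
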